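/- Let G be a finite abelian group, χ : G →* ℂˣ a character, and n ≥ 1. Then the monomial representation V_χ of G ≀ Sₙ on ℂⁿ is isomorphic, as a representation of G ≀ Sₙ, to the induced representation Ind_{G × (G ≀ S_{n−1})}^{G ≀ Sₙ}(χ ⊠ 1), where G × (G ≀ S_{n−1}) is embedded in G ≀ Sₙ as the subgroup of pairs (f, σ) with σ fixing the first coordinate (via a bijection Fin 1 ⊕ Fin (n−1) ≃ Fin n), and χ ⊠ 1 is the one-dimensional character sending such a pair to χ(f 0). -/

import Mathlib

open scoped TensorProduct

noncomputable section

/-- The permutation action of `Sₙ` on `Fin n → G`, as automorphisms. -/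
def permMulAut (G : Type) [Group G] (n : ℕ) : Equiv.Perm (Fin n) →* MulAut (Fin n → G) where
  toFun σ :=
    { toFun := fun f i => f (σ⁻¹ i)
      invFun := fun f i => f (σ i)
      left_inv := fun f => funext fun i => by simp
      right_inv := fun f => funext fun i => by simp
      map_mul' := fun f g => rfl }
  map_one' := by ext f i; simp
  map_mul' := fun σ τ => by ext f i; simp [mul_inv_rev]

/-- The wreath product `G ≀ Sₙ = Gⁿ ⋊ Sₙ`. -/
abbrev Wreath (G : Type) [Group G] (n : ℕ) : Type :=
  (Fin n → G) ⋊[permMulAut G n] Equiv.Perm (Fin n)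

/-- The character of a representation. -/
def repChar {H V : Type} [Monoid H] [AddCommGroup V] [Module ℂ V]
    (ρ : Representation ℂ H V) : H → ℂ :=
  fun h => LinearMap.trace ℂ V (ρ h)

/-- The monomial representation `V_χ` of `G ≀ Sₙ` on `ℂⁿ` attached to a one-dimensional
character `χ` of `G`: `((f, σ) • v) i = χ (f i) • v (σ⁻¹ i)`. -/
def monomialRep {G : Type} [Group G] (n : ℕ) (χ : G →* ℂˣ) :
    Representation ℂ (Wreath G n) (Fin n → ℂ) where
  toFun w :=
    { toFun := fun v i => (χ (w.left i) : ℂ) • v (w.right⁻¹ i)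
      map_add' := fun v₁ v₂ => by funext i; simp [mul_add]
      map_smul' := fun c v => by funext i; simp [smul_eq_mul]; ring }
  map_one' := by ext v i; simp
  map_mul' w₁ w₂ := by
    ext v i
    simp [permMulAut, mul_inv_rev, smul_eq_mul, Equiv.Perm.mul_def, mul_assoc,
      Equiv.Perm.inv_def, Equiv.symm_trans_apply]

/-- The identification `Fin k ⊕ Fin (n - k) ≃ Fin n` for `k ≤ n`. -/
def finSumEquiv {k n : ℕ} (hk : k ≤ n) : Fin k ⊕ Fin (n - k) ≃ Fin n :=
  finSumFinEquiv.trans (finCongr (Nat.add_sub_cancel' hk))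

def pairHom (G : Type) [Group G] {k n : ℕ} (hk : k ≤ n) :
    Wreath G k × Wreath G (n - k) →* Wreath G n where
  toFun p :=
    ⟨fun i => Sum.elim p.1.left p.2.left ((finSumEquiv hk).symm i),
     (finSumEquiv hk).permCongr (Equiv.sumCongr p.1.right p.2.right)⟩
  map_one' := by
    ext i
    · simp [Equiv.permCongr]
    · simp [Equiv.permCongr]
  map_mul' p q := by
    ext i
    · show Sum.elim _ _ _ = _ * (permMulAut G n _ _) i
      simp only [SemidirectProduct.mul_left, Prod.fst_mul, Prod.snd_mul, Pi.mul_apply,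
        permMulAut, MonoidHom.coe_mk, OneHom.coe_mk, Equiv.coe_fn_mk,
        Equiv.permCongr_apply, Equiv.permCongr, Equiv.equivCongr, Equiv.coe_fn_symm_mk]
      rcases h : (finSumEquiv hk).symm i with j | j <;>
        simp [h, Equiv.Perm.inv_def, Equiv.sumCongr_symm, Equiv.sumCongr_apply,
          -SemidirectProduct.mk_eq_inl_mul_inr]
    · simp only [SemidirectProduct.mul_right, Prod.fst_mul, Prod.snd_mul,
        Equiv.permCongr_apply, Equiv.Perm.mul_apply, Equiv.sumCongr_apply, Equiv.symm_apply_apply]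
      rcases (finSumEquiv hk).symm i with j | j <;> simp

section Induced

variable {K H M : Type} [Group K] [Group H] [AddCommGroup M] [Module ℂ M]

/-- The relations defining `ℂ[H] ⊗_{ℂ[K]} M` as a quotient of `ℂ[H] ⊗_ℂ M`,
where `ℂ[H]` is a right `ℂ[K]`-module via `ι : K →* H`. -/
def indRelations (ι : K →* H) (ρ : Representation ℂ K M) :
    Submodule ℂ (MonoidAlgebra ℂ H ⊗[ℂ] M) :=
  Submodule.span ℂ {x | ∃ (a : MonoidAlgebra ℂ H) (kk : K) (m : M),
    x = (a * MonoidAlgebra.single (ι kk) 1) ⊗ₜ[ℂ] m - a ⊗ₜ[ℂ] (ρ kk m)}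

/-- The carrier `ℂ[H] ⊗_{ℂ[K]} M` of the induced representation. -/
abbrev IndV (ι : K →* H) (ρ : Representation ℂ K M) : Type :=
  (MonoidAlgebra ℂ H ⊗[ℂ] M) ⧸ indRelations ι ρ

lemma indRelations_le_comap (ι : K →* H) (ρ : Representation ℂ K M) (h : H) :
    indRelations ι ρ ≤ (indRelations ι ρ).comap
      (TensorProduct.map (LinearMap.mulLeft ℂ (MonoidAlgebra.single h (1:ℂ))) LinearMap.id) := by
  refine Submodule.span_le.2 ?_
  rintro x ⟨a, kk, m, rfl⟩
  simp only [SetLike.mem_coe, Submodule.mem_comap, map_sub, TensorProduct.map_tmul,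
    LinearMap.mulLeft_apply, LinearMap.id_apply]
  exact Submodule.subset_span
    ⟨MonoidAlgebra.single h 1 * a, kk, m, by rw [mul_assoc]⟩

/-- The induced representation `Ind_K^H M = ℂ[H] ⊗_{ℂ[K]} M`, for a representation of `K`
viewed inside `H` via `ι : K →* H`, with `H` acting by left multiplication on `ℂ[H]`. -/
def indRep (ι : K →* H) (ρ : Representation ℂ K M) : Representation ℂ H (IndV ι ρ) where
  toFun h := Submodule.mapQ _ _
    (TensorProduct.map (LinearMap.mulLeft ℂ (MonoidAlgebra.single h (1:ℂ))) LinearMap.id)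
    (indRelations_le_comap ι ρ h)
  map_one' := by
    refine Submodule.linearMap_qext _ ?_
    ext x
    simp [MonoidAlgebra.one_def]
  map_mul' h₁ h₂ := by
    refine Submodule.linearMap_qext _ ?_
    ext x
    simp [MonoidAlgebra.single_mul_single, mul_assoc]


end Induced
/-- The embedding of `G` into `G ≀ S₁`. -/
def gHom (G : Type) [Group G] : G →* Wreath G 1 where
  toFun g := ⟨fun _ => g, 1⟩
  map_one' := rfl
  map_mul' g h := by
    ext i
    · exact rfl
    · simp

/-- The one-dimensional representation `χ ⊠ 1` of `G × (G ≀ S_{n-1})`, sending `(g, w)`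
to `χ g`. -/
def chiBoxOne {G : Type} [Group G] (n : ℕ) (χ : G →* ℂˣ) :
    Representation ℂ (G × Wreath G (n - 1)) ℂ where
  toFun p := ((χ p.1 : ℂ)) • LinearMap.id
  map_one' := by ext; simp
  map_mul' p q := by ext; simp [smul_eq_mul]; ring


section AuxProof

open SemidirectProduct

/-- Restriction of a permutation of `Fin 1 ⊕ β` fixing `inl 0` to a permutation of `β`. -/
def restrictPerm {β : Type} (π : Equiv.Perm (Fin 1 ⊕ β)) (hπ : π (Sum.inl 0) = Sum.inl 0) :
    Equiv.Perm β where
  toFun j := (π (Sum.inr j)).getRight (by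
    rcases h : π (Sum.inr j) with x | x
    · exact absurd (π.injective (h.trans (by rw [Subsingleton.elim x 0, ← hπ]))) (by simp)
    · simp)
  invFun j := (π⁻¹ (Sum.inr j)).getRight (by
    rcases h : π⁻¹ (Sum.inr j) with x | x
    · have : π (Sum.inl x) = Sum.inr j := by
        rw [← h]; simp
      rw [Subsingleton.elim x 0, hπ] at this; simp at this
    · simp)
  left_inv j := by
    apply Sum.inr_injective
    rw [Sum.inr_getRight, Sum.inr_getRight]
    simp
  right_inv j := by
    apply Sum.inr_injective
    rw [Sum.inr_getRight, Sum.inr_getRight]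
    simp

variable {G : Type} [CommGroup G] (χ : G →* ℂˣ) {n : ℕ} (hn : 1 ≤ n)

/-- The embedding `G × (G ≀ S_{n-1}) →* G ≀ Sₙ`. -/
abbrev iotaAux (G : Type) [CommGroup G] {n : ℕ} (hn : 1 ≤ n) :
    G × Wreath G (n - 1) →* Wreath G n :=
  (pairHom G hn).comp ((gHom G).prodMap (MonoidHom.id (Wreath G (n - 1))))

/-- The distinguished index `0`. -/
def i0 : Fin n := finSumEquiv hn (Sum.inl 0)

/-- The basis vector at `i0`. -/
def e0 : Fin n → ℂ := Pi.single (i0 hn) 1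

lemma iotaAux_left (k : G × Wreath G (n-1)) (i : Fin n) :
    ((iotaAux G hn) k).left i
      = Sum.elim (fun _ => k.1) k.2.left ((finSumEquiv hn).symm i) := rfl

lemma iotaAux_right (k : G × Wreath G (n-1)) :
    ((iotaAux G hn) k).right
      = (finSumEquiv hn).permCongr (Equiv.sumCongr 1 k.2.right) := rfl

lemma iotaAux_right_i0 (k : G × Wreath G (n-1)) :
    ((iotaAux G hn) k).right (i0 hn) = i0 hn := by
  rw [iotaAux_right, Equiv.permCongr_apply, i0, Equiv.symm_apply_apply]
  rfl

lemma iotaAux_left_i0 (k : G × Wreath G (n-1)) :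
    ((iotaAux G hn) k).left (i0 hn) = k.1 := by
  rw [iotaAux_left, i0, Equiv.symm_apply_apply]
  rfl

lemma monomialRep_apply (w : Wreath G n) (v : Fin n → ℂ) (i : Fin n) :
    monomialRep n χ w v i = (χ (w.left i) : ℂ) * v (w.right⁻¹ i) := rfl

lemma monomialRep_e0 (w : Wreath G n) :
    monomialRep n χ w (e0 hn) = Pi.single (w.right (i0 hn)) (χ (w.left (w.right (i0 hn))) : ℂ) := by
  funext j
  rw [monomialRep_apply]
  rcases eq_or_ne j (w.right (i0 hn)) with h | h
  · subst h
    rw [← Equiv.Perm.mul_apply, inv_mul_cancel, Equiv.Perm.one_apply, Pi.single_eq_same, e0, Pi.single_eq_same, mul_one]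
  · have hne : w.right⁻¹ j ≠ i0 hn := fun hc => h (by rw [← hc]; simp)
    rw [Pi.single_eq_of_ne h, e0, Pi.single_eq_of_ne hne, mul_zero]

lemma monomialRep_iota_e0 (k : G × Wreath G (n-1)) :
    monomialRep n χ ((iotaAux G hn) k) (e0 hn) = (χ k.1 : ℂ) • e0 hn := by
  rw [monomialRep_e0, iotaAux_right_i0, iotaAux_left_i0, e0]
  funext j
  rcases eq_or_ne j (i0 hn) with rfl | h
  · simp
  · simp [Pi.single_eq_of_ne h]

/-- The linear map `ℂ[G ≀ Sₙ] → ℂⁿ`, `h ↦ ρ(h) e₀`. -/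
def Lmap (χ : G →* ℂˣ) (hn : 1 ≤ n) : MonoidAlgebra ℂ (Wreath G n) →ₗ[ℂ] (Fin n → ℂ) :=
  (Finsupp.linearCombination ℂ (fun h => monomialRep n χ h (e0 hn))).comp
    (MonoidAlgebra.coeffLinearEquiv ℂ).toLinearMap

lemma Lmap_single (h : Wreath G n) (c : ℂ) :
    Lmap χ hn (MonoidAlgebra.single h c) = c • monomialRep n χ h (e0 hn) :=
  Finsupp.linearCombination_single ℂ (v := fun h => monomialRep n χ h (e0 hn)) c h

lemma Lmap_mul_single (a : MonoidAlgebra ℂ (Wreath G n)) (k : G × Wreath G (n-1)) :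
    Lmap χ hn (a * MonoidAlgebra.single ((iotaAux G hn) k) 1) = (χ k.1 : ℂ) • Lmap χ hn a := by
  induction a using MonoidAlgebra.induction_linear with
  | zero => simp
  | add f g hf hg => rw [add_mul, map_add, map_add, hf, hg, smul_add]
  | single h c =>
    rw [MonoidAlgebra.single_mul_single, mul_one, Lmap_single, Lmap_single, map_mul,
      Module.End.mul_apply, monomialRep_iota_e0, map_smul, smul_comm]

lemma Lmap_single_mul (h : Wreath G n) (a : MonoidAlgebra ℂ (Wreath G n)) :
    Lmap χ hn (MonoidAlgebra.single h 1 * a) = monomialRep n χ h (Lmap χ hn a) := by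
  induction a using MonoidAlgebra.induction_linear with
  | zero => simp
  | add f g hf hg => rw [mul_add, map_add, map_add, hf, hg, map_add]
  | single h' c =>
    rw [MonoidAlgebra.single_mul_single, one_mul, Lmap_single, Lmap_single, map_mul,
      map_smul, Module.End.mul_apply]

/-- `φ : ℂ[H] ⊗ ℂ → ℂⁿ`. -/
def phiMap (χ : G →* ℂˣ) (hn : 1 ≤ n) :
    MonoidAlgebra ℂ (Wreath G n) ⊗[ℂ] ℂ →ₗ[ℂ] (Fin n → ℂ) :=
  (Lmap χ hn).comp (TensorProduct.rid ℂ (MonoidAlgebra ℂ (Wreath G n))).toLinearMap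

lemma phiMap_tmul (a : MonoidAlgebra ℂ (Wreath G n)) (m : ℂ) :
    phiMap χ hn (a ⊗ₜ[ℂ] m) = m • Lmap χ hn a := by
  simp [phiMap, TensorProduct.rid_tmul]

lemma indRelations_le_ker :
    indRelations (iotaAux G hn) (chiBoxOne n χ) ≤ LinearMap.ker (phiMap χ hn) := by
  refine Submodule.span_le.2 ?_
  rintro x ⟨a, k, m, rfl⟩
  simp only [SetLike.mem_coe, LinearMap.mem_ker, map_sub, phiMap_tmul, Lmap_mul_single,
    sub_eq_zero, smul_smul]
  have hch : (chiBoxOne n χ) k m = (χ k.1 : ℂ) * m := by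
    simp [chiBoxOne, smul_eq_mul]
  rw [hch, mul_comm]

/-- The forward linear map `IndV → ℂⁿ`. -/
def eMap (χ : G →* ℂˣ) (hn : 1 ≤ n) :
    IndV (iotaAux G hn) (chiBoxOne n χ) →ₗ[ℂ] (Fin n → ℂ) :=
  Submodule.liftQ _ (phiMap χ hn) (indRelations_le_ker χ hn)

lemma eMap_mk (a : MonoidAlgebra ℂ (Wreath G n)) (m : ℂ) :
    eMap χ hn (Submodule.Quotient.mk (a ⊗ₜ[ℂ] m)) = m • Lmap χ hn a := by
  rw [eMap, Submodule.liftQ_apply, phiMap_tmul]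

/-- The group element `(1, swap i₀ i)`. -/
def wElem (hn : 1 ≤ n) (i : Fin n) : Wreath G n := ⟨1, Equiv.swap (i0 hn) i⟩

lemma monomialRep_wElem_e0 (i : Fin n) :
    monomialRep n χ (wElem hn i : Wreath G n) (e0 hn) = Pi.single i 1 := by
  rw [monomialRep_e0]
  simp [wElem]

/-- The inverse linear map `ℂⁿ → IndV`. -/
def psiMap (χ : G →* ℂˣ) (hn : 1 ≤ n) :
    (Fin n → ℂ) →ₗ[ℂ] IndV (iotaAux G hn) (chiBoxOne n χ) where
  toFun v := ∑ i, v i • Submodule.Quotient.mk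
    ((MonoidAlgebra.single (wElem hn i : Wreath G n) (1:ℂ)) ⊗ₜ[ℂ] (1:ℂ))
  map_add' v w := by simp [add_smul, Finset.sum_add_distrib]
  map_smul' c v := by simp [smul_smul, Finset.smul_sum]

lemma psiMap_single (j : Fin n) (r : ℂ) :
    psiMap χ hn (Pi.single j r)
      = r • Submodule.Quotient.mk
          ((MonoidAlgebra.single (wElem hn j : Wreath G n) (1:ℂ)) ⊗ₜ[ℂ] (1:ℂ)) := by
  rw [psiMap]
  simp only [LinearMap.coe_mk, AddHom.coe_mk]
  rw [Finset.sum_eq_single j (fun b _ hb => by rw [Pi.single_eq_of_ne hb, zero_smul])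
    (fun hm => absurd (Finset.mem_univ _) hm), Pi.single_eq_same]

lemma eMap_psiMap (v : Fin n → ℂ) : eMap χ hn (psiMap χ hn v) = v := by
  rw [psiMap]
  simp only [LinearMap.coe_mk, AddHom.coe_mk, map_sum, map_smul, eMap_mk, one_smul,
    Lmap_single, monomialRep_wElem_e0]
  funext j
  simp [Finset.sum_apply, Pi.single_apply]

lemma tmul_single_eq (h : Wreath G n) (c m : ℂ) :
    (MonoidAlgebra.single h c : MonoidAlgebra ℂ (Wreath G n)) ⊗ₜ[ℂ] m
      = m • c • ((MonoidAlgebra.single h (1:ℂ)) ⊗ₜ[ℂ] (1:ℂ)) := by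
  have h1 : (MonoidAlgebra.single h c : MonoidAlgebra ℂ (Wreath G n))
      = c • MonoidAlgebra.single h (1:ℂ) := by
    rw [MonoidAlgebra.smul_single', mul_one]
  have h2 : m = m • (1:ℂ) := by rw [smul_eq_mul, mul_one]
  calc (MonoidAlgebra.single h c : MonoidAlgebra ℂ (Wreath G n)) ⊗ₜ[ℂ] m
      = (c • MonoidAlgebra.single h (1:ℂ)) ⊗ₜ[ℂ] (m • (1:ℂ)) := by rw [← h1, ← h2]
    _ = m • c • ((MonoidAlgebra.single h (1:ℂ)) ⊗ₜ[ℂ] (1:ℂ)) := by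
        rw [TensorProduct.tmul_smul, ← TensorProduct.smul_tmul']

/-- The key reduction. -/
lemma mk_single_eq (h : Wreath G n) :
    (Submodule.Quotient.mk ((MonoidAlgebra.single h (1:ℂ)) ⊗ₜ[ℂ] (1:ℂ))
        : IndV (iotaAux G hn) (chiBoxOne n χ))
      = (χ (h.left (h.right (i0 hn))) : ℂ) • Submodule.Quotient.mk
          ((MonoidAlgebra.single (wElem hn (h.right (i0 hn)) : Wreath G n) (1:ℂ)) ⊗ₜ[ℂ] (1:ℂ)) := by
  set i := h.right (i0 hn) with hi
  set w : Wreath G n := wElem hn i with hw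
  set u : Wreath G n := w⁻¹ * h with hu
  have hwr : w.right = Equiv.swap (i0 hn) i := rfl
  have hwl : w.left = 1 := rfl
  have hur : u.right = (Equiv.swap (i0 hn) i)⁻¹ * h.right := by
    rw [hu, SemidirectProduct.mul_right, SemidirectProduct.inv_right, hwr]
  have hu_right_i0 : u.right (i0 hn) = i0 hn := by
    rw [hur, Equiv.Perm.mul_apply, ← hi, Equiv.swap_inv, Equiv.swap_apply_right]
  have hu_left_i0 : u.left (i0 hn) = h.left i := by
    have : u.left = w⁻¹.left * (permMulAut G n w⁻¹.right) h.left := by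
      rw [hu, SemidirectProduct.mul_left]
    rw [this]
    have hinvl : w⁻¹.left = 1 := by
      rw [SemidirectProduct.inv_left, hwl]
      simp
    rw [hinvl, one_mul, SemidirectProduct.inv_right, hwr]
    show h.left (((Equiv.swap (i0 hn) i)⁻¹)⁻¹ (i0 hn)) = h.left i
    rw [inv_inv, Equiv.swap_apply_left]
  have hπ : ((finSumEquiv hn).symm.permCongr u.right) (Sum.inl 0) = Sum.inl 0 := by
    rw [Equiv.permCongr_apply, Equiv.symm_symm]
    show (finSumEquiv hn).symm (u.right (i0 hn)) = Sum.inl 0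
    rw [hu_right_i0, i0, Equiv.symm_apply_apply]
  set k : G × Wreath G (n-1) :=
    (u.left (i0 hn),
      ⟨fun j => u.left (finSumEquiv hn (Sum.inr j)),
       restrictPerm ((finSumEquiv hn).symm.permCongr u.right) hπ⟩) with hk
  have hik : (iotaAux G hn) k = u := by
    have hleft : ∀ j, ((iotaAux G hn) k).left j = u.left j := by
      intro j
      rw [iotaAux_left]
      rcases hj : (finSumEquiv hn).symm j with x | x
      · have hji : j = i0 hn := by
          rw [Subsingleton.elim x 0] at hj
          rw [← (finSumEquiv hn).apply_symm_apply j, hj]; rfl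
        rw [Sum.elim_inl, hji]
      · have hjx : finSumEquiv hn (Sum.inr x) = j := by
          rw [← hj, Equiv.apply_symm_apply]
        rw [Sum.elim_inr]
        show u.left (finSumEquiv hn (Sum.inr x)) = u.left j
        rw [hjx]
    have hright : ∀ j, ((iotaAux G hn) k).right j = u.right j := by
      intro j
      rw [iotaAux_right, Equiv.permCongr_apply]
      rcases hj : (finSumEquiv hn).symm j with x | x
      · have hji : j = i0 hn := by
          rw [Subsingleton.elim x 0] at hj
          rw [← (finSumEquiv hn).apply_symm_apply j, hj]; rfl
        simp only [Equiv.sumCongr_apply, Sum.map_inl, Equiv.Perm.coe_one, id_eq]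
        rw [Subsingleton.elim x 0, hji, hu_right_i0]
        rfl
      · simp only [Equiv.sumCongr_apply, Sum.map_inr]
        have hjx : finSumEquiv hn (Sum.inr x) = j := by
          rw [← hj, Equiv.apply_symm_apply]
        show finSumEquiv hn (Sum.inr (((restrictPerm ((finSumEquiv hn).symm.permCongr u.right) hπ)) x)) = u.right j
        rw [restrictPerm]
        simp only [Equiv.coe_fn_mk]
        rw [Sum.inr_getRight, Equiv.permCongr_apply, Equiv.symm_symm, hjx,
          Equiv.apply_symm_apply]
    exact SemidirectProduct.ext (funext hleft) (Equiv.ext hright)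
  have hwk : w * (iotaAux G hn) k = h := by
    rw [hik, hu, mul_inv_cancel_left]
  have hrel : (Submodule.Quotient.mk ((MonoidAlgebra.single h (1:ℂ)) ⊗ₜ[ℂ] (1:ℂ))
        : IndV (iotaAux G hn) (chiBoxOne n χ))
      = Submodule.Quotient.mk
          ((MonoidAlgebra.single w (1:ℂ)) ⊗ₜ[ℂ] ((chiBoxOne n χ) k (1:ℂ))) := by
    rw [Submodule.Quotient.eq]
    have hs : (MonoidAlgebra.single h (1:ℂ))
        = MonoidAlgebra.single w (1:ℂ) * MonoidAlgebra.single ((iotaAux G hn) k) (1:ℂ) := by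
      rw [MonoidAlgebra.single_mul_single, one_mul, hwk]
    rw [hs]
    exact Submodule.subset_span ⟨MonoidAlgebra.single w (1:ℂ), k, 1, rfl⟩
  have hch : (chiBoxOne n χ) k (1:ℂ) = (χ k.1 : ℂ) := by
    simp [chiBoxOne, smul_eq_mul]
  have hk1 : k.1 = h.left i := hu_left_i0
  rw [hrel, hch, hk1, ← Submodule.Quotient.mk_smul, ← TensorProduct.tmul_smul,
    smul_eq_mul, mul_one]

lemma psiMap_eMap (x : IndV (iotaAux G hn) (chiBoxOne n χ)) :
    psiMap χ hn (eMap χ hn x) = x := by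
  obtain ⟨y, rfl⟩ := Submodule.Quotient.mk_surjective _ x
  induction y using TensorProduct.induction_on with
  | zero => simp
  | add y z hy hz => rw [Submodule.Quotient.mk_add, map_add, map_add, hy, hz]
  | tmul a m =>
    induction a using MonoidAlgebra.induction_linear with
    | zero => simp [TensorProduct.zero_tmul]
    | add f g hf hg =>
      rw [TensorProduct.add_tmul, Submodule.Quotient.mk_add, map_add, map_add, hf, hg]
    | single h c =>
      rw [eMap_mk, Lmap_single, map_smul, map_smul, monomialRep_e0, psiMap_single,
        ← mk_single_eq χ hn h, tmul_single_eq h c m, Submodule.Quotient.mk_smul,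
        Submodule.Quotient.mk_smul]

lemma indRep_mk {K M : Type} [Group K] [AddCommGroup M] [Module ℂ M]
    (ι : K →* Wreath G n) (ρ : Representation ℂ K M) (h : Wreath G n)
    (y : MonoidAlgebra ℂ (Wreath G n) ⊗[ℂ] M) :
    indRep ι ρ h (Submodule.Quotient.mk y)
      = Submodule.Quotient.mk
          (TensorProduct.map (LinearMap.mulLeft ℂ (MonoidAlgebra.single h (1:ℂ)))
            LinearMap.id y) := rfl

lemma eMap_equivariant (w : Wreath G n) (x : IndV (iotaAux G hn) (chiBoxOne n χ)) :
    eMap χ hn (indRep (iotaAux G hn) (chiBoxOne n χ) w x)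
      = monomialRep n χ w (eMap χ hn x) := by
  obtain ⟨y, rfl⟩ := Submodule.Quotient.mk_surjective _ x
  rw [indRep_mk]
  induction y using TensorProduct.induction_on with
  | zero =>
    rw [map_zero, Submodule.Quotient.mk_zero, map_zero, map_zero]
  | add y z hy hz =>
    rw [map_add, Submodule.Quotient.mk_add, Submodule.Quotient.mk_add, map_add, map_add, hy, hz,
      map_add]
  | tmul a m =>
    rw [TensorProduct.map_tmul, LinearMap.mulLeft_apply, LinearMap.id_apply,
      eMap_mk, eMap_mk, Lmap_single_mul, map_smul]

end AuxProof

/-- For a character `χ` of a finite abelian group `G` and `n ≥ 1`, the monomial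
representation `V_χ` of `G ≀ Sₙ` on `ℂⁿ` is isomorphic, as a representation of `G ≀ Sₙ`,
to the induced representation `Ind_{G × (G ≀ S_{n-1})}^{G ≀ Sₙ} (χ ⊠ 1)`, where
`G × (G ≀ S_{n-1})` sits inside `G ≀ Sₙ` via `Fin 1 ⊕ Fin (n-1) ≃ Fin n`. -/
theorem monomialRep_iso_induced
    (G : Type) [CommGroup G] [Fintype G] (χ : G →* ℂˣ) (n : ℕ) (hn : 1 ≤ n) :
    ∃ e : IndV ((pairHom G hn).comp ((gHom G).prodMap (MonoidHom.id (Wreath G (n - 1)))))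
          (chiBoxOne n χ) ≃ₗ[ℂ] (Fin n → ℂ),
      ∀ (w : Wreath G n) (x : IndV
          ((pairHom G hn).comp ((gHom G).prodMap (MonoidHom.id (Wreath G (n - 1)))))
          (chiBoxOne n χ)),
        e (indRep ((pairHom G hn).comp ((gHom G).prodMap (MonoidHom.id (Wreath G (n - 1)))))
            (chiBoxOne n χ) w x)
          = monomialRep n χ w (e x) := by
  exact ⟨LinearEquiv.ofLinear (eMap χ hn) (psiMap χ hn)
    (LinearMap.ext (eMap_psiMap χ hn)) (LinearMap.ext (psiMap_eMap χ hn)),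
    eMap_equivariant χ hn⟩

end
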